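/- arXiv:1506.00330 — 2 statements merged into one kernel-verified Lean document; each statement's English description precedes it below -/
import Mathlib

section
/- Let Q* be an optimal solution of the SDP: minimize tr(C Q) subject to tr(A Q) = z, tr(Q) ≤ P, Q ⪰ 0, where C ⪰ 0 is diagonal, A = h h† is rank one, 0 ≤ z ≤ P‖h‖², P ≥ 0. Then there exists an optimal solution Q̂ of the same SDP with rank(Q̂) ≤ 1. -/
open Matrix
open scoped ComplexOrder

open scoped MatrixOrder in
lemma cs_psd {M : ℕ} {Q : Matrix (Fin M) (Fin M) ℂ} (hQ : Q.PosSemidef) (x y : Fin M → ℂ) :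
    ‖(star x ⬝ᵥ Q *ᵥ y)‖ ^ 2 ≤ (star x ⬝ᵥ Q *ᵥ x).re * (star y ⬝ᵥ Q *ᵥ y).re := by
  obtain ⟨B, rfl⟩ := CStarAlgebra.nonneg_iff_eq_star_mul_self.mp hQ.nonneg
  rw [Matrix.star_eq_conjTranspose]
  have key : ∀ u w : Fin M → ℂ, star u ⬝ᵥ (Bᴴ * B) *ᵥ w
      = @inner ℂ (EuclideanSpace ℂ (Fin M)) _ (WithLp.toLp 2 (B *ᵥ u)) (WithLp.toLp 2 (B *ᵥ w)) := by
    intro u w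
    rw [← Matrix.mulVec_mulVec, Matrix.dotProduct_mulVec, ← Matrix.star_mulVec]
    simp [PiLp.inner_apply, dotProduct, RCLike.inner_apply, mul_comm]
  rw [key, key, key]
  set a : EuclideanSpace ℂ (Fin M) := WithLp.toLp 2 (B *ᵥ x)
  set b : EuclideanSpace ℂ (Fin M) := WithLp.toLp 2 (B *ᵥ y)
  have h1 : ‖(inner (𝕜 := ℂ) a b)‖ ≤ ‖a‖ * ‖b‖ := by
    simpa using norm_inner_le_norm (𝕜 := ℂ) a b
  have h2 : (inner (𝕜 := ℂ) a a).re = ‖a‖ ^ 2 := by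
    rw [@norm_sq_eq_re_inner ℂ]; rfl
  have h3 : (inner (𝕜 := ℂ) b b).re = ‖b‖ ^ 2 := by
    rw [@norm_sq_eq_re_inner ℂ]; rfl
  rw [h2, h3]
  calc ‖(inner (𝕜 := ℂ) a b)‖ ^ 2 ≤ (‖a‖ * ‖b‖) ^ 2 :=
        pow_le_pow_left₀ (norm_nonneg _) h1 2
    _ = ‖a‖ ^ 2 * ‖b‖ ^ 2 := by ring

lemma quad_vecMulVec {M : ℕ} (v x y : Fin M → ℂ) :
    star x ⬝ᵥ (Matrix.vecMulVec v (star v)) *ᵥ y = (star x ⬝ᵥ v) * (star v ⬝ᵥ y) := by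
  simp only [dotProduct, Matrix.mulVec, Matrix.vecMulVec_apply, Pi.star_apply,
    Finset.mul_sum, Finset.sum_mul]
  rw [Finset.sum_comm]
  exact Finset.sum_congr rfl fun i _ => Finset.sum_congr rfl fun j _ => by ring

/-- Feasibility for the SDP: `Q ⪰ 0`, `tr(A Q) = z`, `tr(Q) ≤ P`. -/
def SDPFeasible {M : ℕ} (A : Matrix (Fin M) (Fin M) ℂ) (z P : ℝ)
    (Q : Matrix (Fin M) (Fin M) ℂ) : Prop :=
  Q.PosSemidef ∧ (A * Q).trace = (z : ℂ) ∧ (Q.trace).re ≤ P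

/-- Any optimal solution of the SDP
`min tr(C Q) s.t. tr(A Q) = z, tr(Q) ≤ P, Q ⪰ 0` (with `C ⪰ 0` diagonal and
`A = h hᴴ` rank one) can be replaced by a rank-one optimal solution. -/
theorem exists_rank_one_optimal {M : ℕ} (h : Fin M → ℂ) (d : Fin M → ℝ)
    (hd : ∀ k, 0 ≤ d k) (z P : ℝ) (hP : 0 ≤ P) (hz : 0 ≤ z)
    (hzP : z ≤ P * ∑ i, ‖h i‖ ^ 2)
    (C : Matrix (Fin M) (Fin M) ℂ) (hC : C = Matrix.diagonal (fun k => (d k : ℂ)))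
    (A : Matrix (Fin M) (Fin M) ℂ) (hA : A = Matrix.vecMulVec h (star h))
    (Qstar : Matrix (Fin M) (Fin M) ℂ)
    (hfeas : SDPFeasible A z P Qstar)
    (hopt : ∀ Q, SDPFeasible A z P Q → ((C * Qstar).trace).re ≤ ((C * Q).trace).re) :
    ∃ Qhat, SDPFeasible A z P Qhat ∧ (C * Qhat).trace = (C * Qstar).trace ∧
      Qhat.rank ≤ 1 := by
  obtain ⟨hQ, hTrA, hTrP⟩ := hfeas
  -- trace formulas
  have traceA : ∀ W : Matrix (Fin M) (Fin M) ℂ, (A * W).trace = star h ⬝ᵥ W *ᵥ h := by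
    intro W
    rw [hA, Matrix.trace]
    simp only [Matrix.diag_apply, Matrix.mul_apply, Matrix.vecMulVec_apply,
      dotProduct, Matrix.mulVec, Pi.star_apply]
    rw [Finset.sum_comm]
    refine Finset.sum_congr rfl fun j _ => ?_
    rw [Finset.mul_sum]
    exact Finset.sum_congr rfl fun i _ => by ring
  have traceC : ∀ W : Matrix (Fin M) (Fin M) ℂ, (C * W).trace = ∑ k, (d k : ℂ) * W k k := by
    intro W
    rw [hC, Matrix.trace]
    simp [Matrix.diag_apply, Matrix.diagonal_mul]
  -- diagonal entries of a PSD matrix and single-vector dot products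
  have single_dot : ∀ (W : Matrix (Fin M) (Fin M) ℂ) (y : Fin M → ℂ) (k : Fin M),
      star (Pi.single k (1:ℂ)) ⬝ᵥ W *ᵥ y = (W *ᵥ y) k := by
    intro W y k
    simp [dotProduct, Pi.single_apply, apply_ite]
  have diag_nn : ∀ k, 0 ≤ Qstar k k := by
    intro k
    have := hQ.dotProduct_mulVec_nonneg (Pi.single k 1)
    rw [single_dot] at this
    simpa [Matrix.mulVec_single] using this
  -- objective at Qstar is a nonnegative real
  have objQ_nn : 0 ≤ (C * Qstar).trace := by
    rw [traceC]
    refine Finset.sum_nonneg fun k _ => mul_nonneg ?_ (diag_nn k)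
    exact_mod_cast Complex.zero_le_real.mpr (hd k)
  -- s = star h ⬝ᵥ Qstar *ᵥ h = z
  set v : Fin M → ℂ := Qstar *ᵥ h with hv
  have hs : star h ⬝ᵥ v = (z : ℂ) := by rw [← traceA Qstar, hTrA]
  rcases eq_or_lt_of_le hz with hz0 | hz0
  · -- z = 0 : take Qhat = 0
    refine ⟨0, ⟨Matrix.PosSemidef.zero, by simp [← hz0], by simp [hP]⟩, ?_, ?_⟩
    · have h0 : ((C * Qstar).trace).re ≤ 0 := by
        have := hopt 0 ⟨Matrix.PosSemidef.zero, by simp [← hz0], by simp [hP]⟩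
        simpa using this
      have := Complex.nonneg_iff.mp objQ_nn
      rw [mul_zero, Matrix.trace_zero]
      exact Complex.ext (by simpa using le_antisymm this.1 h0) (by simpa using this.2)
    · simp [Matrix.rank_zero]
  · -- z > 0
    set Qhat : Matrix (Fin M) (Fin M) ℂ :=
      Matrix.vecMulVec (((z : ℂ)⁻¹) • v) (star v) with hQhat
    have hQhat_quad : ∀ x y : Fin M → ℂ,
        star x ⬝ᵥ Qhat *ᵥ y = (z : ℂ)⁻¹ * ((star x ⬝ᵥ v) * (star v ⬝ᵥ y)) := by
      intro x y
      have : Qhat = (z : ℂ)⁻¹ • Matrix.vecMulVec v (star v) := by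
        ext i j; simp [hQhat, Matrix.vecMulVec_apply]
      rw [this, Matrix.smul_mulVec, dotProduct_smul, quad_vecMulVec]
      simp
    have hzC : (z : ℂ) ≠ 0 := by exact_mod_cast hz0.ne'
    -- Cauchy-Schwarz bound on |v k|²
    have hCS : ∀ k, ‖v k‖ ^ 2 ≤ (Qstar k k).re * z := by
      intro k
      have := cs_psd hQ (Pi.single k 1) h
      rw [single_dot, single_dot] at this
      have hsre : (star h ⬝ᵥ Qstar *ᵥ h).re = z := by rw [← hv, hs, Complex.ofReal_re]
      rw [hsre] at this
      simpa [Matrix.mulVec_single] using this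
    -- feasibility of Qhat
    have hherm : Qhat.IsHermitian := by
      ext i j
      simp only [Matrix.conjTranspose_apply, hQhat, Matrix.vecMulVec_apply, Pi.smul_apply,
        Pi.star_apply, smul_eq_mul, star_mul', star_star, star_inv₀, RCLike.star_def,
        Complex.conj_conj, Complex.conj_ofReal]
      ring
    have hpsd : Qhat.PosSemidef := by
      refine .of_dotProduct_mulVec_nonneg hherm fun x => ?_
      rw [hQhat_quad]
      have h1 : star x ⬝ᵥ v = star (star v ⬝ᵥ x) := by
        simp [dotProduct, mul_comm]
      rw [h1]
      refine mul_nonneg ?_ (star_mul_self_nonneg _)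
      rw [← Complex.ofReal_inv]
      exact_mod_cast Complex.zero_le_real.mpr (inv_nonneg.mpr hz)
    have hvs : star v ⬝ᵥ h = (z : ℂ) := by
      have : star v ⬝ᵥ h = star (star h ⬝ᵥ v) := by
        simp [dotProduct, mul_comm]
      rw [this, hs]
      simp [Complex.conj_ofReal]
    have hfeasA : (A * Qhat).trace = (z : ℂ) := by
      rw [traceA, hQhat_quad, hs, hvs]
      field_simp
    -- diagonal entries of Qhat
    have hQhat_diag : ∀ k, Qhat k k = ((z⁻¹ * ‖v k‖ ^ 2 : ℝ) : ℂ) := by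
      intro k
      simp only [hQhat, Matrix.vecMulVec_apply, Pi.smul_apply, Pi.star_apply, smul_eq_mul]
      have hx : v k * star (v k) = ((‖v k‖ ^ 2 : ℝ) : ℂ) := by
        rw [RCLike.star_def, Complex.mul_conj, Complex.sq_norm]
      rw [mul_assoc, hx]
      push_cast; ring
    -- trace bound
    have hdiag_le : ∀ k, z⁻¹ * ‖v k‖ ^ 2 ≤ (Qstar k k).re := fun k => by
      rw [inv_mul_eq_div]
      exact (div_le_iff₀ hz0).mpr (hCS k)
    have trace_re : Qhat.trace.re ≤ P := by
      have htr : Qhat.trace = ((∑ k, z⁻¹ * ‖v k‖ ^ 2 : ℝ) : ℂ) := by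
        rw [Matrix.trace, Complex.ofReal_sum]
        exact Finset.sum_congr rfl fun k _ => hQhat_diag k
      rw [htr, Complex.ofReal_re]
      calc ∑ k, z⁻¹ * ‖v k‖ ^ 2 ≤ ∑ k, (Qstar k k).re :=
            Finset.sum_le_sum fun k _ => hdiag_le k
        _ = Qstar.trace.re := (Complex.re_sum _ _).symm
        _ ≤ P := hTrP
    have hfeasQhat : SDPFeasible A z P Qhat := ⟨hpsd, hfeasA, trace_re⟩
    -- objective
    have objhat : (C * Qhat).trace = ((∑ k, d k * (z⁻¹ * ‖v k‖ ^ 2) : ℝ) : ℂ) := by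
      rw [traceC, Complex.ofReal_sum]
      refine Finset.sum_congr rfl fun k _ => ?_
      rw [hQhat_diag k, ← Complex.ofReal_mul]
    have objhat_le : ((C * Qhat).trace).re ≤ ((C * Qstar).trace).re := by
      rw [objhat, Complex.ofReal_re, traceC, Complex.re_sum]
      refine Finset.sum_le_sum fun k _ => ?_
      rw [Complex.re_ofReal_mul]
      exact mul_le_mul_of_nonneg_left (hdiag_le k) (hd k)
    have objeq : (C * Qhat).trace = (C * Qstar).trace := by
      have hle := hopt Qhat hfeasQhat
      have him : ((C * Qstar).trace).im = 0 := ((Complex.nonneg_iff.mp objQ_nn).2).symm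
      have him2 : ((C * Qhat).trace).im = 0 := by rw [objhat]; exact Complex.ofReal_im _
      exact Complex.ext (le_antisymm objhat_le hle) (him2.trans him.symm)
    refine ⟨Qhat, hfeasQhat, objeq, ?_⟩
    rw [hQhat, Matrix.vecMulVec_eq (Fin 1)]
    refine le_trans (Matrix.rank_mul_le_left _ _) ?_
    exact (Matrix.rank_le_card_width (Matrix.replicateCol (Fin 1) (((z : ℂ)⁻¹) • v))).trans (by simp)
end

section
/- Let S ∈ ℝ^{n×n} be a matrix with nonnegative entries. Then there exists a positive weight vector w ∈ ℝⁿ (all wᵢ > 0) such that the weighted-maximum operator norm ‖S‖_∞^w := max_i (1/wᵢ) Σ_j [S]_{ij} w_j is strictly less than 1 if and only if ρ(S) < 1. -/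
open Matrix

attribute [local instance] Matrix.linftyOpNormedRing Matrix.linftyOpNormedAlgebra

noncomputable def specRad {n : Type*} [Fintype n] [DecidableEq n]
    (A : Matrix n n ℂ) : ℝ :=
  sSup ((fun z : ℂ => ‖z‖) '' spectrum ℂ A)

private lemma pow_entry_nonneg {n : ℕ} (S : Matrix (Fin n) (Fin n) ℝ)
    (hS : ∀ i j, 0 ≤ S i j) (m : ℕ) : ∀ i j, 0 ≤ (S ^ m) i j := by
  induction m with
  | zero =>
    intro i j
    simp only [pow_zero, Matrix.one_apply]
    split <;> norm_num
  | succ m ih =>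
    intro i j
    rw [pow_succ, Matrix.mul_apply]
    exact Finset.sum_nonneg fun l _ => mul_nonneg (ih i l) (hS l j)

private lemma eigen_of_mem_spectrum {n : ℕ} (M : Matrix (Fin n) (Fin n) ℂ) (μ : ℂ)
    (h : μ ∈ spectrum ℂ M) : ∃ v : Fin n → ℂ, v ≠ 0 ∧ M *ᵥ v = μ • v := by
  rw [spectrum.mem_iff] at h
  have hdet : (algebraMap ℂ (Matrix (Fin n) (Fin n) ℂ) μ - M).det = 0 := by
    by_contra hd
    exact h ((Matrix.isUnit_iff_isUnit_det _).mpr (isUnit_iff_ne_zero.mpr hd))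
  obtain ⟨v, hv0, hv⟩ := (Matrix.exists_mulVec_eq_zero_iff).mpr hdet
  refine ⟨v, hv0, ?_⟩
  rw [Matrix.sub_mulVec] at hv
  have h1 : algebraMap ℂ (Matrix (Fin n) (Fin n) ℂ) μ *ᵥ v = μ • v := by
    rw [Algebra.algebraMap_eq_smul_one, Matrix.smul_mulVec, Matrix.one_mulVec]
  rw [h1] at hv
  exact (sub_eq_zero.mp hv).symm

/-- For a nonnegative matrix `S`, there exists a positive weight vector `w` with
weighted-maximum operator norm `max_i (∑ j S i j w j)/w i < 1` iff `ρ(S) < 1`. -/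
theorem exists_weight_norm_lt_one_iff_specRad_lt_one {n : ℕ}
    (S : Matrix (Fin n) (Fin n) ℝ) (hS : ∀ i j, 0 ≤ S i j) :
    (∃ w : Fin n → ℝ, (∀ i, 0 < w i) ∧ ∀ i, (∑ j, S i j * w j) / w i < 1) ↔
      specRad (S.map (fun x => (x : ℂ))) < 1 := by
  set M : Matrix (Fin n) (Fin n) ℂ := S.map (fun x => (x : ℂ)) with hM
  constructor
  · rintro ⟨w, hw, hlt⟩
    rcases isEmpty_or_nonempty (Fin n) with hemp | hne
    · have hspec : spectrum ℂ M = ∅ := by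
        ext μ
        simp only [Set.mem_empty_iff_false, iff_false]
        intro hμ
        exact (spectrum.mem_iff.mp hμ) (isUnit_of_subsingleton _)
      rw [specRad, hspec]
      simp [Real.sSup_empty]
    · set c : ℝ := Finset.univ.sup' Finset.univ_nonempty
        (fun i => (∑ j, S i j * w j) / w i) with hc
      have hc1 : c < 1 := by
        rw [hc, Finset.sup'_lt_iff]
        exact fun i _ => hlt i
      have hc0 : 0 ≤ c := by
        obtain ⟨i⟩ := hne
        refine le_trans ?_ (Finset.le_sup' _ (Finset.mem_univ i))
        exact div_nonneg (Finset.sum_nonneg fun j _ =>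
          mul_nonneg (hS i j) (hw j).le) (hw i).le
      refine lt_of_le_of_lt (Real.sSup_le ?_ hc0) hc1
      rintro x ⟨μ, hμ, rfl⟩
      obtain ⟨v, hv0, hv⟩ := eigen_of_mem_spectrum M μ hμ
      obtain ⟨i0, -, hmax⟩ := Finset.exists_max_image Finset.univ
        (fun i => ‖v i‖ / w i) Finset.univ_nonempty
      have hvi0 : 0 < ‖v i0‖ := by
        obtain ⟨j, hj⟩ := Function.ne_iff.mp hv0
        have h1 : 0 < ‖v j‖ / w j :=
          div_pos (norm_pos_iff.mpr (by simpa using hj)) (hw j)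
        have h2 := lt_of_lt_of_le h1 (hmax j (Finset.mem_univ j))
        have h3 := mul_pos h2 (hw i0)
        rwa [div_mul_cancel₀ _ (hw i0).ne'] at h3
      have hbound : ∀ j, ‖v j‖ ≤ ‖v i0‖ / w i0 * w j := by
        intro j
        have h := hmax j (Finset.mem_univ j)
        calc ‖v j‖ = ‖v j‖ / w j * w j :=
              (div_mul_cancel₀ (‖v j‖) (hw j).ne').symm
          _ ≤ ‖v i0‖ / w i0 * w j :=
              mul_le_mul_of_nonneg_right h (hw j).le
      have key : ‖μ‖ * ‖v i0‖ ≤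
          ((∑ j, S i0 j * w j) / w i0) * ‖v i0‖ := by
        calc ‖μ‖ * ‖v i0‖
            = ‖(M *ᵥ v) i0‖ := by rw [← norm_mul, hv]; simp
          _ = ‖∑ j, (S i0 j : ℂ) * v j‖ := by
              simp [Matrix.mulVec, dotProduct, hM, Matrix.map_apply]
          _ ≤ ∑ j, ‖(S i0 j : ℂ) * v j‖ :=
              norm_sum_le _ _
          _ = ∑ j, S i0 j * ‖v j‖ := by
              refine Finset.sum_congr rfl fun j _ => ?_
              rw [norm_mul, Complex.norm_real, Real.norm_of_nonneg (hS i0 j)]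
          _ ≤ ∑ j, S i0 j * (‖v i0‖ / w i0 * w j) :=
              Finset.sum_le_sum fun j _ =>
                mul_le_mul_of_nonneg_left (hbound j) (hS i0 j)
          _ = ((∑ j, S i0 j * w j) / w i0) * ‖v i0‖ := by
              rw [Finset.sum_div, Finset.sum_mul]
              refine Finset.sum_congr rfl fun j _ => ?_
              ring
      have hμle : ‖μ‖ ≤ (∑ j, S i0 j * w j) / w i0 :=
        le_of_mul_le_mul_right key hvi0
      have hfc : (∑ j, S i0 j * w j) / w i0 ≤ c := by
        rw [hc]; exact Finset.le_sup' (fun i => (∑ j, S i j * w j) / w i) (Finset.mem_univ i0)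
      exact hμle.trans hfc
  · intro hρ
    have hcs : CompleteSpace (Matrix (Fin n) (Fin n) ℂ) :=
      FiniteDimensional.complete ℂ (Matrix (Fin n) (Fin n) ℂ)
    have hbdd : BddAbove ((fun z : ℂ => ‖z‖) '' spectrum ℂ M) :=
      ((spectrum.isCompact M).image continuous_norm).bddAbove
    have hsr : spectralRadius ℂ M < 1 := by
      have hle : spectralRadius ℂ M ≤ ENNReal.ofReal (specRad M) := by
        rw [spectralRadius]
        refine iSup₂_le fun μ hμ => ?_
        rw [← ENNReal.ofReal_coe_nnreal, coe_nnnorm]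
        exact ENNReal.ofReal_le_ofReal (le_csSup hbdd ⟨μ, hμ, rfl⟩)
      exact lt_of_le_of_lt hle (ENNReal.ofReal_lt_one.mpr hρ)
    have htend := spectrum.pow_nnnorm_pow_one_div_tendsto_nhds_spectralRadius M
    have hev : ∀ᶠ k : ℕ in Filter.atTop,
        (‖M ^ k‖₊ : ENNReal) ^ (1 / (k : ℝ)) < 1 :=
      htend.eventually_lt_const hsr
    obtain ⟨k, hk1, hk⟩ := (hev.and (Filter.eventually_ge_atTop 1)).exists
    have hknorm : (‖M ^ k‖₊ : ENNReal) < 1 := by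
      by_contra hcon
      push_neg at hcon
      have h4 : (1 : ENNReal) ^ (1 / (k : ℝ)) ≤ (‖M ^ k‖₊ : ENNReal) ^ (1 / (k : ℝ)) :=
        ENNReal.rpow_le_rpow hcon (by positivity)
      rw [ENNReal.one_rpow] at h4
      exact absurd (lt_of_le_of_lt h4 hk1) (lt_irrefl _)
    have hmapk : M ^ k = (S ^ k).map (fun x => (x : ℂ)) := by
      have h5 : M = Complex.ofRealHom.mapMatrix S := rfl
      rw [h5, ← _root_.map_pow]
      rfl
    have hrow : ∀ i, ∑ j, (S ^ k) i j < 1 := by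
      intro i
      have h1 : (∑ j, ‖(M ^ k) i j‖₊) ≤ ‖M ^ k‖₊ := by
        rw [Matrix.linfty_opNNNorm_def]
        exact Finset.le_sup (f := fun i => ∑ j, ‖(M ^ k) i j‖₊) (Finset.mem_univ i)
      have h2 : (∑ j, ‖(M ^ k) i j‖₊ : NNReal) < 1 := by
        have := lt_of_le_of_lt (ENNReal.coe_le_coe.mpr h1) hknorm
        exact_mod_cast this
      have h3 : (∑ j, (S ^ k) i j) ≤ ((∑ j, ‖(M ^ k) i j‖₊ : NNReal) : ℝ) := by
        push_cast
        refine Finset.sum_le_sum fun j _ => ?_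
        rw [hmapk]
        simp only [Matrix.map_apply, coe_nnnorm, Complex.norm_real, Real.norm_eq_abs]
        exact le_abs_self _
      calc (∑ j, (S ^ k) i j) ≤ _ := h3
        _ < 1 := by exact_mod_cast h2
    set w : Fin n → ℝ := fun i => ∑ m ∈ Finset.range k, ∑ j, (S ^ m) i j with hwdef
    have hwpos : ∀ i, 0 < w i := by
      intro i
      have h0 : (0:ℕ) ∈ Finset.range k := Finset.mem_range.mpr hk
      refine lt_of_lt_of_le ?_ (Finset.single_le_sum
        (fun m _ => Finset.sum_nonneg fun j _ => pow_entry_nonneg S hS m i j) h0)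
      simp [Matrix.one_apply]
    refine ⟨w, hwpos, ?_⟩
    intro i
    rw [div_lt_one (hwpos i)]
    have hstep : ∀ m : ℕ, ∑ j, S i j * (∑ l, (S ^ m) j l) = ∑ l, (S ^ (m+1)) i l := by
      intro m
      calc ∑ j, S i j * ∑ l, (S ^ m) j l
          = ∑ j, ∑ l, S i j * (S ^ m) j l := by simp [Finset.mul_sum]
        _ = ∑ l, ∑ j, S i j * (S ^ m) j l := Finset.sum_comm
        _ = ∑ l, (S ^ (m+1)) i l := by simp [pow_succ', Matrix.mul_apply]
    have hcalc : ∑ j, S i j * w j = ∑ m ∈ Finset.range k, ∑ l, (S ^ (m+1)) i l := by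
      calc ∑ j, S i j * w j
          = ∑ j, ∑ m ∈ Finset.range k, S i j * ∑ l, (S ^ m) j l := by
            simp [hwdef, Finset.mul_sum]
        _ = ∑ m ∈ Finset.range k, ∑ j, S i j * ∑ l, (S ^ m) j l := Finset.sum_comm
        _ = _ := Finset.sum_congr rfl fun m _ => hstep m
    have h0sum : ∑ l, (S ^ 0) i l = 1 := by simp [Matrix.one_apply]
    have hshift : ∑ m ∈ Finset.range k, (∑ l, (S ^ (m+1)) i l)
        = w i + (∑ l, (S ^ k) i l) - (∑ l, (S ^ 0) i l) := by
      have h1 := Finset.sum_range_succ' (fun m => ∑ l, (S ^ m) i l) k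
      have h2 := Finset.sum_range_succ (fun m => ∑ l, (S ^ m) i l) k
      simp only [hwdef]
      linarith [h1, h2]
    rw [hcalc, hshift, h0sum]
    linarith [hrow i]
end
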